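/- arXiv:1702.04245 — 2 statements merged into one kernel-verified Lean document; each statement's English description precedes it below -/
import Mathlib

section
/- For every finite graph G and every minor H of G, β(H) ≤ 1 + √(2·e(G)), where e(G) denotes the number of edges of G. -/
open SimpleGraph

/-- `x` and `y` lie in the same component of `G - S`:
there is a walk from `x` to `y` in `G` avoiding `S`. -/
def ConnAvoiding {V : Type} (G : SimpleGraph V) (S : Set V) (x y : V) : Prop :=
  ∃ p : G.Walk x y, ∀ v ∈ p.support, v ∉ S

/-- `X` is a `(<k)`-inseparable set of vertices of `G`: it has at least `k` vertices and
no two of its vertices can be separated by deleting fewer than `k` vertices. -/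
def IsInseparable {V : Type} (G : SimpleGraph V) (k : ℕ) (X : Set V) : Prop :=
  k ≤ X.ncard ∧
  ∀ x ∈ X, ∀ y ∈ X, x ≠ y → ∀ S : Set V, S.ncard < k → x ∉ S → y ∉ S →
    ConnAvoiding G S x y

/-- `X` is a `k`-block of `G`: a maximal `(<k)`-inseparable set of vertices. -/
def IsBlock {V : Type} (G : SimpleGraph V) (k : ℕ) (X : Set V) : Prop :=
  IsInseparable G k X ∧ ∀ Y : Set V, IsInseparable G k Y → X ⊆ Y → Y = X

/-- The block number `β(G)`: the maximum `k` for which `G` contains a `k`-block. -/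
noncomputable def blockNumber {V : Type} (G : SimpleGraph V) : ℕ :=
  sSup {k : ℕ | ∃ X : Set V, IsBlock G k X}

/-- There is a `k`-fan from `v` to `U` in `G`: `k` paths starting at `v`, otherwise
disjoint, each ending in `U` (trivial paths allowed). -/
def IsFanTo {V : Type} (G : SimpleGraph V) (k : ℕ) (v : V) (U : Set V) : Prop :=
  ∃ (e : Fin k → V) (P : ∀ i : Fin k, G.Path v (e i)),
    (∀ i, e i ∈ U) ∧
    ∀ i j : Fin k, i ≠ j →
      ∀ w, w ∈ (P i).val.support → w ∈ (P j).val.support → w = v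

/-- `X` is a `k`-fan-set: from every `x ∈ X` there is a `k`-fan to `X`. -/
def IsFanSet {V : Type} (G : SimpleGraph V) (k : ℕ) (X : Set V) : Prop :=
  ∀ x ∈ X, IsFanTo G k x X

/-- The `∞`-admissibility of `G`: the maximum `k` for which `G` contains a nonempty
`k`-fan-set. -/
noncomputable def admInf {V : Type} (G : SimpleGraph V) : ℕ :=
  sSup {k : ℕ | ∃ X : Set V, X.Nonempty ∧ IsFanSet G k X}

/-- `C` is (the vertex set of) a connected component of the subgraph of `G` induced
on `A`: a maximal subset of `A` inducing a connected subgraph. -/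
def IsCompOf {V : Type} (G : SimpleGraph V) (A C : Set V) : Prop :=
  C ⊆ A ∧ (G.induce C).Connected ∧
  ∀ D : Set V, C ⊆ D → D ⊆ A → (G.induce D).Connected → D = C

/-- `H` is a minor of `G`, via disjoint nonempty connected branch sets. -/
def IsMinor {W V : Type} (H : SimpleGraph W) (G : SimpleGraph V) : Prop :=
  ∃ B : W → Set V,
    (∀ h, (B h).Nonempty) ∧
    (∀ h, (G.induce (B h)).Connected) ∧
    (∀ h h', h ≠ h' → Disjoint (B h) (B h')) ∧
    ∀ h h', H.Adj h h' → ∃ u ∈ B h, ∃ v ∈ B h', G.Adj u v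

/-- `H` is a topological minor of `G`: there are branch vertices `φ u` and, for every
edge `uv` of `H`, a path in `G` from `φ u` to `φ v`; distinct edge-paths meet only in
branch vertices (hence only in common endpoints), and internal vertices of the paths
are not branch vertices. -/
def IsTopMinor {W V : Type} (H : SimpleGraph W) (G : SimpleGraph V) : Prop :=
  ∃ (φ : W ↪ V) (P : ∀ u v : W, H.Adj u v → G.Path (φ u) (φ v)),
    (∀ u v (h : H.Adj u v) w, w ∈ (P u v h).val.support →
        w ∈ Set.range φ → w = φ u ∨ w = φ v) ∧
    (∀ u v (h : H.Adj u v) u' v' (h' : H.Adj u' v'), s(u, v) ≠ s(u', v') →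
        ∀ w, w ∈ (P u v h).val.support → w ∈ (P u' v' h').val.support →
          w ∈ Set.range φ)

/-- A tree-decomposition of `G` with tree on node type `T`. -/
structure TreeDecomp {V : Type} (G : SimpleGraph V) (T : Type) where
  tree : SimpleGraph T
  isTree : tree.IsTree
  part : T → Set V
  part_covers : ∀ v : V, ∃ t, v ∈ part t
  part_edge : ∀ ⦃u v : V⦄, G.Adj u v → ∃ t, u ∈ part t ∧ v ∈ part t
  part_path : ∀ (t₁ t₂ t₃ : T) (p : tree.Path t₁ t₃), t₂ ∈ p.val.support →
    part t₁ ∩ part t₃ ⊆ part t₂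

/-- `m` pairwise vertex-disjoint `A`–`B` paths in `G`. -/
def DisjPaths {V : Type} (G : SimpleGraph V) (m : ℕ) (A B : Set V) : Prop :=
  ∃ (a b : Fin m → V) (P : ∀ i : Fin m, G.Path (a i) (b i)),
    (∀ i, a i ∈ A) ∧ (∀ i, b i ∈ B) ∧
    ∀ i j : Fin m, i ≠ j → ∀ w, w ∈ (P i).val.support → w ∉ (P j).val.support

/-- `a` is lexicographically smaller than `b` as `(n+1)`-tuples `(a 0, …, a n)`. -/
def FatLexLT (n : ℕ) (a b : ℕ → ℕ) : Prop :=
  ∃ i ≤ n, (∀ j < i, a j = b j) ∧ a i < b i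

namespace TreeDecomp

variable {V T : Type} {G : SimpleGraph V}

/-- The tree-decomposition has adhesion less than `k`. -/
def AdhesionLT (D : TreeDecomp G T) (k : ℕ) : Prop :=
  ∀ ⦃s t : T⦄, D.tree.Adj s t → (D.part s ∩ D.part t).ncard < k

/-- The torso of the part at node `t`: the induced subgraph on `part t`, with edges
added between any two vertices lying in a common adhesion-set at `t`. -/
def torso (D : TreeDecomp G T) (t : T) : SimpleGraph V where
  Adj u v := u ≠ v ∧ u ∈ D.part t ∧ v ∈ D.part t ∧
    (G.Adj u v ∨ ∃ s : T, D.tree.Adj s t ∧ u ∈ D.part s ∧ v ∈ D.part s)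
  symm := ⟨by
    rintro u v ⟨h1, h2, h3, h4⟩
    refine ⟨h1.symm, h3, h2, ?_⟩
    rcases h4 with h | ⟨s, hs, hu, hv⟩
    · exact Or.inl h.symm
    · exact Or.inr ⟨s, hs, hv, hu⟩⟩
  loopless := ⟨fun u h => h.1 rfl⟩

/-- Degree of `x` in the torso at `t`. -/
noncomputable def torsoDeg (D : TreeDecomp G T) (t : T) (x : V) : ℕ :=
  ((D.torso t).neighborSet x).ncard

/-- The width of a tree-decomposition: `max (|V_t| - 1)`. -/
noncomputable def width [Fintype T] (D : TreeDecomp G T) : ℕ :=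
  Finset.univ.sup fun t : T => (D.part t).ncard - 1

/-- Entry `i` of the fatness tuple: the number of parts of size `n - i`,
where `n = |V(G)|`. -/
noncomputable def fatness [Fintype V] (D : TreeDecomp G T) (i : ℕ) : ℕ :=
  {t : T | (D.part t).ncard = Fintype.card V - i}.ncard

/-- The tree-decomposition is `k`-atomic: it has adhesion `< k` and its fatness is
lexicographically minimum among all tree-decompositions of `G` of adhesion `< k`. -/
def IsAtomic [Fintype V] (D : TreeDecomp G T) (k : ℕ) : Prop :=
  D.AdhesionLT k ∧
  ∀ (T' : Type) (_ : Fintype T') (D' : TreeDecomp G T'), D'.AdhesionLT k →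
    ¬ FatLexLT (Fintype.card V) D'.fatness D.fatness

/-- The tree-decomposition is `k`-lean. -/
def IsLean (D : TreeDecomp G T) (k : ℕ) : Prop :=
  D.AdhesionLT k ∧
  ∀ (s t : T) (A B : Set V), A ⊆ D.part s → B ⊆ D.part t →
    A.ncard = B.ncard → A.ncard ≤ k →
    DisjPaths G A.ncard A B ∨
    ∃ u w : T, D.tree.Adj u w ∧
      (∀ p : D.tree.Path s t, s(u, w) ∈ p.val.edges) ∧
      (D.part u ∩ D.part w).ncard < A.ncard

end TreeDecomp

/-- Auxiliary: edge count of a minor is at most edge count of the host graph. -/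
lemma minor_edge_le {W V : Type} [Fintype V] (H : SimpleGraph W) (G : SimpleGraph V)
    (hH : IsMinor H G) : H.edgeSet.ncard ≤ G.edgeSet.ncard := by
  classical
  obtain ⟨B, hne, hconn, hdisj, hadj⟩ := hH
  have key : ∀ (u : V) (a c : W), u ∈ B a → u ∈ B c → a = c := by
    intro u a c ha hc
    by_contra hne'
    exact Set.disjoint_left.mp (hdisj a c hne') ha hc
  have hex : ∀ e : H.edgeSet, ∃ q : V × V × W × W,
      (e : Sym2 W) = s(q.2.2.1, q.2.2.2) ∧ q.1 ∈ B q.2.2.1 ∧ q.2.1 ∈ B q.2.2.2 ∧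
      G.Adj q.1 q.2.1 := by
    rintro ⟨e, he⟩
    induction e using Sym2.ind with
    | _ a b =>
      obtain ⟨u, hu, v, hv, huv⟩ := hadj a b (H.mem_edgeSet.mp he)
      exact ⟨(u, v, a, b), rfl, hu, hv, huv⟩
  choose q hq1 hq2 hq3 hq4 using hex
  have hfin : G.edgeSet.Finite := Set.toFinite _
  have : Nat.card H.edgeSet ≤ Nat.card G.edgeSet := by
    have hfinite : Finite G.edgeSet := hfin
    refine Nat.card_le_card_of_injective
      (fun e => ⟨s((q e).1, (q e).2.1), G.mem_edgeSet.mpr (hq4 e)⟩) ?_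
    intro e1 e2 heq
    have heq' : s((q e1).1, (q e1).2.1) = s((q e2).1, (q e2).2.1) :=
      congrArg Subtype.val heq
    have := Sym2.eq_iff.mp heq'
    apply Subtype.ext
    rw [hq1 e1, hq1 e2]
    rcases this with ⟨h1, h2⟩ | ⟨h1, h2⟩
    · rw [key _ _ _ (hq2 e1) (h1 ▸ hq2 e2), key _ _ _ (hq3 e1) (h2 ▸ hq3 e2)]
    · rw [key _ _ _ (hq2 e1) (h1 ▸ hq3 e2), key _ _ _ (hq3 e1) (h2 ▸ hq2 e2),
        Sym2.eq_swap]
  rwa [Nat.card_coe_set_eq, Nat.card_coe_set_eq] at this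

/-- Auxiliary: an inseparable set forces many edges. -/
lemma insep_edges {W : Type} [Fintype W] (H : SimpleGraph W) (k : ℕ) (X : Set W)
    (h : IsInseparable H k X) : k * (k - 1) ≤ 2 * H.edgeSet.ncard := by
  classical
  rcases Nat.lt_or_ge k 2 with hk | hk
  · interval_cases k <;> simp
  · have hdeg : ∀ x ∈ X, k - 1 ≤ H.degree x := by
      intro x hx
      by_contra hlt
      push_neg at hlt
      have hdegcard : (H.neighborSet x).ncard = H.degree x := by
        rw [Set.ncard_eq_toFinset_card']
        rfl
      have hsub : X \ {x} ⊆ H.neighborSet x := by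
        intro y hy
        have hyX : y ∈ X := hy.1
        have hyx : y ≠ x := hy.2
        have hS : ((H.neighborSet x) \ {y}).ncard < k := by
          calc ((H.neighborSet x) \ {y}).ncard ≤ (H.neighborSet x).ncard :=
                Set.ncard_le_ncard Set.diff_subset (Set.toFinite _)
            _ = H.degree x := hdegcard
            _ < k - 1 := hlt
            _ ≤ k := Nat.sub_le _ _
        obtain ⟨p, hp⟩ := h.2 x hx y hyX (Ne.symm hyx) _ hS
          (by simp [H.irrefl]) (by simp)
        cases p with
        | nil => exact absurd rfl (Ne.symm hyx)
        | @cons _ w _ hxw p' =>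
          have hw : w ∉ H.neighborSet x \ {y} :=
            hp w (by simp [SimpleGraph.Walk.start_mem_support])
          have : w = y := by
            by_contra hwy
            exact hw ⟨hxw, hwy⟩
          subst this
          exact hxw
      have h1 : k - 1 ≤ (X \ {x}).ncard := by
        rw [Set.ncard_diff_singleton_of_mem hx]
        exact Nat.sub_le_sub_right h.1 1
      have h2 : (X \ {x}).ncard ≤ H.degree x :=
        hdegcard ▸ Set.ncard_le_ncard hsub (Set.toFinite _)
      omega
    have hsum : X.toFinset.card * (k - 1) ≤ ∑ v ∈ X.toFinset, H.degree v := by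
      have h' : ∑ _v ∈ X.toFinset, (k - 1) ≤ ∑ v ∈ X.toFinset, H.degree v :=
        Finset.sum_le_sum (fun x hx => hdeg x (Set.mem_toFinset.mp hx))
      simpa [Finset.sum_const, mul_comm] using h'
    have hcard : k ≤ X.toFinset.card := by
      rw [← Set.ncard_eq_toFinset_card']; exact h.1
    calc k * (k - 1) ≤ X.toFinset.card * (k - 1) :=
          Nat.mul_le_mul_right _ hcard
      _ ≤ ∑ v ∈ X.toFinset, H.degree v := hsum
      _ ≤ ∑ v, H.degree v := Finset.sum_le_sum_of_subset (Finset.subset_univ _)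
      _ = 2 * H.edgeFinset.card := H.sum_degrees_eq_twice_card_edges
      _ = 2 * H.edgeSet.ncard := by rw [Set.ncard_eq_toFinset_card']; rfl

/-- for every minor `H` of `G`, `β(H) ≤ 1 + √(2 e(G))`. -/
theorem stmt_6 {V W : Type} [Fintype V] [Fintype W] (G : SimpleGraph V)
    (H : SimpleGraph W) (hH : IsMinor H G) :
    (blockNumber H : ℝ) ≤ 1 + Real.sqrt (2 * (G.edgeSet.ncard : ℝ)) := by
  classical
  have hsqrt : 0 ≤ Real.sqrt (2 * (G.edgeSet.ncard : ℝ)) := Real.sqrt_nonneg _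
  set s : Set ℕ := {k : ℕ | ∃ X : Set W, IsBlock H k X} with hs_def
  rcases s.eq_empty_or_nonempty with hs | hs
  · have : blockNumber H = 0 := by
      rw [blockNumber, ← hs_def, hs, csSup_empty]; rfl
    rw [this]
    push_cast
    linarith
  · have hbdd : BddAbove s := by
      refine ⟨Fintype.card W, fun k hk => ?_⟩
      obtain ⟨X, hX⟩ := hk
      calc k ≤ X.ncard := hX.1.1
        _ ≤ (Set.univ : Set W).ncard :=
            Set.ncard_le_ncard (Set.subset_univ X) (Set.toFinite _)
        _ = Fintype.card W := by simp [Set.ncard_univ, Nat.card_eq_fintype_card]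
    have hmem : blockNumber H ∈ s := by
      rw [blockNumber, ← hs_def]; exact Nat.sSup_mem hs hbdd
    obtain ⟨X, hX⟩ := hmem
    set k := blockNumber H with hk_def
    have hkk : k * (k - 1) ≤ 2 * H.edgeSet.ncard := insep_edges H k X hX.1
    have hE : H.edgeSet.ncard ≤ G.edgeSet.ncard := minor_edge_le H G hH
    rcases Nat.eq_zero_or_pos k with hk0 | hk0
    · rw [hk0]; push_cast; linarith
    · have hsq : ((k - 1 : ℕ) : ℝ) ^ 2 ≤ 2 * (G.edgeSet.ncard : ℝ) := by
        have : (k - 1) * (k - 1) ≤ 2 * G.edgeSet.ncard := by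
          calc (k - 1) * (k - 1) ≤ k * (k - 1) :=
                Nat.mul_le_mul_right _ (Nat.sub_le _ _)
            _ ≤ 2 * H.edgeSet.ncard := hkk
            _ ≤ 2 * G.edgeSet.ncard := Nat.mul_le_mul_left _ hE
        calc ((k - 1 : ℕ) : ℝ) ^ 2 = (((k - 1) * (k - 1) : ℕ) : ℝ) := by
              push_cast; ring
          _ ≤ ((2 * G.edgeSet.ncard : ℕ) : ℝ) := by exact_mod_cast this
          _ = 2 * (G.edgeSet.ncard : ℝ) := by push_cast; ring
      have hle : ((k - 1 : ℕ) : ℝ) ≤ Real.sqrt (2 * (G.edgeSet.ncard : ℝ)) := by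
        calc ((k - 1 : ℕ) : ℝ) = Real.sqrt (((k - 1 : ℕ) : ℝ) ^ 2) := by
              rw [Real.sqrt_sq (by positivity)]
          _ ≤ Real.sqrt (2 * (G.edgeSet.ncard : ℝ)) := Real.sqrt_le_sqrt hsq
      have hcast : ((k - 1 : ℕ) : ℝ) = (k : ℝ) - 1 := by
        have : (1 : ℕ) ≤ k := hk0
        push_cast [Nat.cast_sub this]
        ring
      rw [hcast] at hle
      linarith
end

section
/- Let p ≥ 0 and k ≥ 2 be integers, let T be a finite tree with maximum degree at most 3, and let X ⊆ V(T) be a set of at least (2p+1)(k−1) vertices each of which has degree at most 2 in T. Then there are p pairwise vertex-disjoint subtrees T_1, …, T_p of T such that |V(T_i) ∩ X| ≥ k for every i ∈ {1, …, p}. -/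
open SimpleGraph

set_option linter.unusedSectionVars false

open SimpleGraph

namespace Stmt15Aux
open SimpleGraph Walk

variable {τ : Type} [DecidableEq τ] {T : SimpleGraph τ}

noncomputable def pth (hT : T.IsTree) (u w : τ) : T.Walk u w :=
  (hT.existsUnique_path u w).exists.choose

lemma pth_isPath (hT : T.IsTree) (u w : τ) : (pth hT u w).IsPath :=
  (hT.existsUnique_path u w).exists.choose_spec

lemma pth_eq (hT : T.IsTree) {u w : τ} (q : T.Walk u w) (hq : q.IsPath) :
    q = pth hT u w := by
  obtain ⟨p, hp, hu⟩ := hT.existsUnique_path u w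
  rw [hu q hq, hu _ (pth_isPath hT u w)]

lemma mem_pth_self (hT : T.IsTree) {v r : τ} (h : v ∈ (pth hT r r).support) : v = r := by
  have h0 : (Walk.nil : T.Walk r r) = pth hT r r := pth_eq hT _ IsPath.nil
  rw [← h0] at h; simpa using h

lemma dropUntil_pth (hT : T.IsTree) {u w z : τ} (h : z ∈ (pth hT u w).support) :
    (pth hT u w).dropUntil z h = pth hT z w :=
  pth_eq hT _ ((pth_isPath hT u w).dropUntil h)

lemma takeUntil_pth (hT : T.IsTree) {u w z : τ} (h : z ∈ (pth hT u w).support) :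
    (pth hT u w).takeUntil z h = pth hT u z :=
  pth_eq hT _ ((pth_isPath hT u w).takeUntil h)

lemma pth_trans (hT : T.IsTree) {u w z y : τ} (hz : z ∈ (pth hT u w).support)
    (hy : y ∈ (pth hT z w).support) : y ∈ (pth hT u w).support := by
  rw [← dropUntil_pth hT hz] at hy
  exact Walk.support_dropUntil_subset _ _ hy

lemma pth_spec (hT : T.IsTree) {u w z : τ} (h : z ∈ (pth hT u w).support) :
    (pth hT u z).append (pth hT z w) = pth hT u w := by
  rw [← takeUntil_pth hT h, ← dropUntil_pth hT h]; exact Walk.take_spec _ h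

lemma isPath_append' {u v w : τ} {p : T.Walk u v} {q : T.Walk v w}
    (hp : p.IsPath) (hq : q.IsPath)
    (h : ∀ x, x ∈ p.support → x ∈ q.support → x = v) : (p.append q).IsPath := by
  rw [Walk.isPath_def, Walk.support_append, List.nodup_append]
  refine ⟨hp.support_nodup, hq.support_nodup.tail, ?_⟩
  intro a ha b ha' hab
  rw [← hab] at ha'
  have hav : a = v := h a ha (List.mem_of_mem_tail ha')
  subst hav
  have := hq.support_nodup
  rw [Walk.support_eq_cons, List.nodup_cons] at this
  exact this.1 ha'

lemma eq_of_mem_both {u v w : τ} {p : T.Walk u v} {q : T.Walk v w}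
    (h : (p.append q).IsPath) {x : τ} (hx : x ∈ p.support) (hx' : x ∈ q.support) : x = v := by
  rw [Walk.isPath_def, Walk.support_append, List.nodup_append] at h
  by_contra hne
  have hx'' : x ∈ q.support.tail := by
    rw [Walk.support_eq_cons] at hx'
    rcases hx' with _ | h2
    · exact absurd rfl hne
    · assumption
  exact h.2.2 x hx x hx'' rfl

lemma pth_between (hT : T.IsTree) {u r v z : τ} (hv : v ∈ (pth hT u r).support)
    (hz : z ∈ (pth hT u v).support) : v ∈ (pth hT z r).support := by
  have hsub : (pth hT z v).support ⊆ (pth hT u v).support := by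
    intro x hx
    rw [← dropUntil_pth hT hz] at hx
    exact Walk.support_dropUntil_subset _ _ hx
  have happ : ((pth hT u v).append (pth hT v r)).IsPath := by
    rw [pth_spec hT hv]; exact pth_isPath hT u r
  have hpath : ((pth hT z v).append (pth hT v r)).IsPath :=
    isPath_append' (pth_isPath _ _ _) (pth_isPath _ _ _)
      (fun x hx hx' => eq_of_mem_both happ (hsub hx) hx')
  rw [← pth_eq hT _ hpath, Walk.mem_support_append_iff]
  exact Or.inl (Walk.end_mem_support _)

lemma mem_pth_of_adj (hT : T.IsTree) {v w r : τ} (hadj : T.Adj w v)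
    (h : w ∉ (pth hT v r).support) : v ∈ (pth hT w r).support := by
  have hpath : (Walk.cons hadj (pth hT v r)).IsPath := (pth_isPath hT v r).cons h
  rw [← pth_eq hT _ hpath, Walk.support_cons]
  exact List.mem_cons_of_mem _ (Walk.start_mem_support _)

lemma not_both (hT : T.IsTree) {v w r : τ} (hadj : T.Adj w v)
    (h1 : v ∈ (pth hT w r).support) : w ∉ (pth hT v r).support := by
  intro h2
  have hspec := pth_spec hT h1
  have hP : ((pth hT w v).append (pth hT v r)).IsPath := by
    rw [hspec]; exact pth_isPath _ _ _
  exact hadj.ne (eq_of_mem_both hP (Walk.start_mem_support _) h2)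

lemma getVert_one_mem_support {u w : τ} (p : T.Walk u w) (hp : ¬ p.Nil) :
    p.getVert 1 ∈ p.support := by
  rw [← Walk.cons_support_tail hp]
  exact List.mem_cons_of_mem _ (Walk.start_mem_support _)

lemma reach_induce {B : Set τ} :
    ∀ {u w : τ} (q : T.Walk u w) (h : ∀ z ∈ q.support, z ∈ B),
      (T.induce B).Reachable ⟨u, h u q.start_mem_support⟩ ⟨w, h w q.end_mem_support⟩ := by
  intro u w q
  induction q with
  | nil => intro h; rfl
  | @cons a b c hadj p ih =>
    intro h
    have h' : ∀ z ∈ p.support, z ∈ B := fun z hz =>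
      h z (by rw [Walk.support_cons]; exact List.mem_cons_of_mem _ hz)
    have hadj' : (T.induce B).Adj ⟨a, h a (Walk.start_mem_support _)⟩
        ⟨b, h' b (Walk.start_mem_support _)⟩ := hadj
    exact hadj'.reachable.trans (ih h')

lemma induce_connected_of {B : Set τ} (hne : B.Nonempty)
    (h : ∀ u ∈ B, ∀ w ∈ B, ∃ q : T.Walk u w, ∀ z ∈ q.support, z ∈ B) :
    (T.induce B).Connected := by
  rw [connected_iff]
  refine ⟨?_, ⟨⟨hne.choose, hne.choose_spec⟩⟩⟩
  rintro ⟨u, hu⟩ ⟨w, hw⟩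
  obtain ⟨q, hq⟩ := h u hu w hw
  exact reach_induce q hq

lemma ncard_biUnion_le' (C : Finset τ) (f : τ → Set τ) (m : ℕ)
    (hf : ∀ w ∈ C, (f w).ncard ≤ m) : (⋃ w ∈ C, f w).ncard ≤ C.card * m := by
  classical
  induction C using Finset.induction_on with
  | empty => simp
  | @insert a s ha ih =>
    rw [Finset.set_biUnion_insert]
    calc (f a ∪ ⋃ w ∈ s, f w).ncard ≤ (f a).ncard + (⋃ w ∈ s, f w).ncard :=
          Set.ncard_union_le _ _
      _ ≤ m + s.card * m := by
          exact Nat.add_le_add (hf a (Finset.mem_insert_self a s))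
            (ih fun w hw => hf w (Finset.mem_insert_of_mem hw))
      _ = (insert a s).card * m := by
          rw [Finset.card_insert_of_notMem ha]; ring


lemma step {τ : Type} [Fintype τ] [DecidableEq τ] {T : SimpleGraph τ} (hT : T.IsTree)
    (hdeg3 : ∀ x : τ, (T.neighborSet x).ncard ≤ 3)
    {k : ℕ} (hk : 2 ≤ k) {X A : Set τ}
    (hXdeg : ∀ x ∈ X, (T.neighborSet x).ncard ≤ 2)
    (hXA : X ⊆ A)
    (hconn : ∀ u ∈ A, ∀ w ∈ A, ∃ q : T.Walk u w, ∀ z ∈ q.support, z ∈ A)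
    (hbig : 3 * (k - 1) + 2 ≤ X.ncard) :
    ∃ B : Set τ, B ⊆ A ∧ B.Nonempty ∧
      (∀ u ∈ B, ∀ w ∈ B, ∃ q : T.Walk u w, ∀ z ∈ q.support, z ∈ B) ∧
      (∀ u ∈ A \ B, ∀ w ∈ A \ B, ∃ q : T.Walk u w, ∀ z ∈ q.support, z ∈ A \ B) ∧
      k ≤ (X ∩ B).ncard ∧ (X ∩ B).ncard ≤ 2 * (k - 1) := by
  classical
  have hk1 : 1 ≤ k - 1 := by omega
  have hXne : X.Nonempty := Set.nonempty_of_ncard_ne_zero (by omega)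
  obtain ⟨r, hrX⟩ := hXne
  have hrA : r ∈ A := hXA hrX
  set D : τ → Set τ := fun v => {u | u ∈ A ∧ v ∈ (pth hT u r).support} with hD
  have hpthA : ∀ u ∈ A, ∀ z ∈ (pth hT u r).support, z ∈ A := by
    intro u hu z hz
    obtain ⟨q, hq⟩ := hconn u hu r hrA
    have hb : q.bypass = pth hT u r := pth_eq hT _ q.bypass_isPath
    rw [← hb] at hz
    exact hq z (q.support_bypass_subset hz)
  have hDr : D r = A := by
    ext u
    simp only [hD, Set.mem_setOf_eq]
    exact ⟨fun h => h.1, fun h => ⟨h, Walk.end_mem_support _⟩⟩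
  set M := {v | v ∈ A ∧ k ≤ (X ∩ D v).ncard} with hM
  have hXk : k ≤ X.ncard := by omega
  have hrM : r ∈ M := by
    refine ⟨hrA, ?_⟩
    rw [hDr, Set.inter_eq_self_of_subset_left hXA]
    exact hXk
  obtain ⟨v, hvM, hvmin⟩ :=
    Set.exists_min_image M (fun v => (D v).ncard) (Set.toFinite _) ⟨r, hrM⟩
  obtain ⟨hvA, hvk⟩ := hvM
  have hvD : v ∈ D v := ⟨hvA, Walk.start_mem_support _⟩
  set Ch := {w | w ∈ A ∧ T.Adj v w ∧ v ∈ (pth hT w r).support} with hCh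
  have hChsub : ∀ w ∈ Ch, D w ⊆ D v \ {v} := by
    rintro w ⟨hwA, hadj, hvw⟩ u ⟨huA, hwu⟩
    refine ⟨⟨huA, pth_trans hT hwu hvw⟩, ?_⟩
    intro hu
    rw [Set.mem_singleton_iff] at hu
    subst hu
    exact not_both hT hadj.symm hvw hwu
  have hdecomp : D v ⊆ insert v (⋃ w ∈ Ch, D w) := by
    rintro u ⟨huA, hvu⟩
    by_cases huv : u = v
    · exact huv ▸ Set.mem_insert _ _
    · refine Set.mem_insert_of_mem _ ?_
      have hnn : ¬ (pth hT u v).reverse.Nil := Walk.not_nil_of_ne (Ne.symm huv)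
      set w := (pth hT u v).reverse.getVert 1 with hw
      have hadj : T.Adj v w := Walk.adj_snd hnn
      have hwsup : w ∈ (pth hT u v).reverse.support := getVert_one_mem_support _ hnn
      have hw_uv : w ∈ (pth hT u v).support := by
        rw [Walk.support_reverse] at hwsup
        exact List.mem_reverse.mp hwsup
      have hw_ur : w ∈ (pth hT u r).support := by
        rw [← takeUntil_pth hT hvu] at hw_uv
        exact Walk.support_takeUntil_subset _ _ hw_uv
      have hwA : w ∈ A := hpthA u huA w hw_ur
      have hchild : v ∈ (pth hT w r).support := by
        rw [← takeUntil_pth hT hvu] at hw_uv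
        exact pth_between hT hvu (by rwa [takeUntil_pth hT hvu] at hw_uv)
      exact Set.mem_biUnion (⟨hwA, hadj, hchild⟩ : w ∈ Ch) ⟨huA, hw_ur⟩
  have hDlt : ∀ w ∈ Ch, (X ∩ D w).ncard ≤ k - 1 := by
    intro w hw
    by_contra hcon
    push_neg at hcon
    have hwM : w ∈ M := ⟨hw.1, by omega⟩
    have hmin := hvmin w hwM
    have hlt : (D w).ncard < (D v).ncard :=
      lt_of_le_of_lt (Set.ncard_le_ncard (hChsub w hw) (Set.toFinite _))
        (Set.ncard_diff_singleton_lt_of_mem hvD (Set.toFinite _))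
    omega
  have hChnbr : Ch ⊆ T.neighborSet v := fun w hw => hw.2.1
  have hChlt : v ≠ r → Ch.ncard + 1 ≤ (T.neighborSet v).ncard := by
    intro hvr
    have hnn : ¬ (pth hT v r).Nil := Walk.not_nil_of_ne hvr
    set p0 := (pth hT v r).getVert 1 with hp0
    have hadj : T.Adj v p0 := Walk.adj_snd hnn
    have hp0mem : p0 ∈ (pth hT v r).support := getVert_one_mem_support _ hnn
    have hp0not : p0 ∉ Ch := by
      rintro ⟨-, -, hvp⟩
      exact not_both hT hadj.symm hvp hp0mem
    have hsub : Ch ⊆ T.neighborSet v \ {p0} := by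
      intro w hw
      refine ⟨hChnbr hw, ?_⟩
      intro h
      rw [Set.mem_singleton_iff] at h
      exact hp0not (h ▸ hw)
    calc Ch.ncard + 1 ≤ (T.neighborSet v \ {p0}).ncard + 1 :=
          Nat.add_le_add_right (Set.ncard_le_ncard hsub (Set.toFinite _)) 1
      _ = (T.neighborSet v).ncard :=
          Set.ncard_diff_singleton_add_one hadj (Set.toFinite _)
  -- the counting bound
  have hcount : (X ∩ D v).ncard ≤ (X ∩ {v}).ncard + Ch.ncard * (k - 1) := by
    have hsub : X ∩ D v ⊆ (X ∩ {v}) ∪ ⋃ w ∈ (Set.toFinite Ch).toFinset, (X ∩ D w) := by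
      rintro u ⟨huX, huD⟩
      rcases hdecomp huD with h | h
      · exact Or.inl ⟨huX, h⟩
      · rw [Set.mem_iUnion₂] at h
        obtain ⟨w, hw, hu⟩ := h
        refine Or.inr ?_
        rw [Set.mem_iUnion₂]
        exact ⟨w, (Set.Finite.mem_toFinset _).2 hw, huX, hu⟩
    calc (X ∩ D v).ncard
        ≤ ((X ∩ {v}) ∪ ⋃ w ∈ (Set.toFinite Ch).toFinset, (X ∩ D w)).ncard :=
          Set.ncard_le_ncard hsub (Set.toFinite _)
      _ ≤ (X ∩ {v}).ncard + (⋃ w ∈ (Set.toFinite Ch).toFinset, (X ∩ D w)).ncard :=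
          Set.ncard_union_le _ _
      _ ≤ (X ∩ {v}).ncard + (Set.toFinite Ch).toFinset.card * (k - 1) := by
          refine Nat.add_le_add_left ?_ _
          exact ncard_biUnion_le' _ _ _ fun w hw =>
            hDlt w ((Set.Finite.mem_toFinset _).1 hw)
      _ = (X ∩ {v}).ncard + Ch.ncard * (k - 1) := by
          rw [← Set.ncard_eq_toFinset_card Ch (Set.toFinite _)]
  have hxv1 : (X ∩ {v}).ncard ≤ 1 := by
    calc (X ∩ {v}).ncard ≤ ({v} : Set τ).ncard :=
          Set.ncard_le_ncard Set.inter_subset_right (Set.toFinite _)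
      _ = 1 := Set.ncard_singleton v
  have hvr : v ≠ r := by
    intro h
    subst h
    have h3 : Ch.ncard ≤ 3 :=
      le_trans (Set.ncard_le_ncard hChnbr (Set.toFinite _)) (hdeg3 v)
    have hXD : X ∩ D v = X := by rw [hDr, Set.inter_eq_self_of_subset_left hXA]
    rw [hXD] at hcount
    have : Ch.ncard * (k - 1) ≤ 3 * (k - 1) := Nat.mul_le_mul_right _ h3
    omega
  have hub : (X ∩ D v).ncard ≤ 2 * (k - 1) := by
    by_cases hvX : v ∈ X
    · have h2 : Ch.ncard + 1 ≤ 2 := le_trans (hChlt hvr) (hXdeg v hvX)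
      have hm : Ch.ncard * (k - 1) ≤ 1 * (k - 1) := Nat.mul_le_mul_right _ (by omega)
      omega
    · have h0 : (X ∩ {v}).ncard = 0 := by
        have : X ∩ {v} = ∅ := by
          ext u; simp only [Set.mem_inter_iff, Set.mem_singleton_iff, Set.mem_empty_iff_false,
            iff_false]
          rintro ⟨huX, rfl⟩; exact hvX huX
        rw [this, Set.ncard_empty]
      have h2 : Ch.ncard ≤ 2 := by
        have := hChlt hvr
        have := hdeg3 v
        omega
      have hm : Ch.ncard * (k - 1) ≤ 2 * (k - 1) := Nat.mul_le_mul_right _ h2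
      omega
  refine ⟨D v, fun u hu => hu.1, ⟨v, hvD⟩, ?_, ?_, hvk, hub⟩
  · -- connectivity of D v
    have key : ∀ y, y ∈ D v → ∀ z ∈ (pth hT y v).support, z ∈ D v := by
      rintro y ⟨hyA, hyv⟩ z hz
      have hz_yr : z ∈ (pth hT y r).support := by
        rw [← takeUntil_pth hT hyv] at hz
        exact Walk.support_takeUntil_subset _ _ hz
      exact ⟨hpthA y hyA z hz_yr, pth_between hT hyv hz⟩
    intro u hu w hw
    refine ⟨(pth hT u v).append (pth hT w v).reverse, ?_⟩
    intro z hz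
    rw [Walk.mem_support_append_iff] at hz
    rcases hz with hz | hz
    · exact key u hu z hz
    · rw [Walk.support_reverse, List.mem_reverse] at hz
      exact key w hw z hz
  · -- connectivity of A \ D v
    have key : ∀ y, y ∈ A \ D v → ∀ z ∈ (pth hT y r).support, z ∈ A \ D v := by
      rintro y ⟨hyA, hyD⟩ z hz
      refine ⟨hpthA y hyA z hz, ?_⟩
      rintro ⟨hzA, hvz⟩
      exact hyD ⟨hyA, pth_trans hT hz hvz⟩
    intro u hu w hw
    refine ⟨(pth hT u r).append (pth hT w r).reverse, ?_⟩
    intro z hz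
    rw [Walk.mem_support_append_iff] at hz
    rcases hz with hz | hz
    · exact key u hu z hz
    · rw [Walk.support_reverse, List.mem_reverse] at hz
      exact key w hw z hz


lemma main {τ : Type} [Fintype τ] [DecidableEq τ] {T : SimpleGraph τ} (hT : T.IsTree)
    (hdeg3 : ∀ x : τ, (T.neighborSet x).ncard ≤ 3)
    {k : ℕ} (hk : 2 ≤ k) :
    ∀ (p : ℕ) (A X : Set τ), X ⊆ A →
      (∀ u ∈ A, ∀ w ∈ A, ∃ q : T.Walk u w, ∀ z ∈ q.support, z ∈ A) →
      (∀ x ∈ X, (T.neighborSet x).ncard ≤ 2) →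
      (2 * p + 1) * (k - 1) ≤ X.ncard →
      ∃ S : Fin p → Set τ, (∀ i, S i ⊆ A) ∧
        (∀ i, (T.induce (S i)).Connected) ∧
        (∀ i j, i ≠ j → Disjoint (S i) (S j)) ∧
        (∀ i, k ≤ (S i ∩ X).ncard) := by
  intro p
  induction p with
  | zero =>
    intro A X _ _ _ _
    exact ⟨fun i => i.elim0, fun i => i.elim0, fun i => i.elim0, fun i => i.elim0,
      fun i => i.elim0⟩
  | succ p IH =>
    intro A X hXA hconn hXdeg hcard
    have hk1 : 1 ≤ k - 1 := by omega
    by_cases hp : p = 0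
    · subst hp
      have hXk : k ≤ X.ncard := by omega
      have hXne : X.Nonempty := Set.nonempty_of_ncard_ne_zero (by omega)
      have hAne : A.Nonempty := ⟨hXne.choose, hXA hXne.choose_spec⟩
      refine ⟨fun _ => A, fun _ => le_refl A, fun _ => induce_connected_of hAne hconn,
        ?_, ?_⟩
      · intro i j hij
        exact absurd ((Fin.fin_one_eq_zero i).trans (Fin.fin_one_eq_zero j).symm) hij
      · intro i
        rw [Set.inter_eq_self_of_subset_right hXA]
        exact hXk
    · have hp1 : 1 ≤ p := by omega
      have hbig : 3 * (k - 1) + 2 ≤ X.ncard := by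
        have h5 : 5 * (k - 1) ≤ (2 * (p + 1) + 1) * (k - 1) :=
          Nat.mul_le_mul_right _ (by omega)
        omega
      obtain ⟨B, hBA, hBne, hBconn, hABconn, hkB, hB2⟩ :=
        step hT hdeg3 hk hXdeg hXA hconn hbig
      set X' := X \ B with hX'
      have hX'sub : X' ⊆ A \ B := fun u hu => ⟨hXA hu.1, hu.2⟩
      have hX'card : (2 * p + 1) * (k - 1) ≤ X'.ncard := by
        have hXB : X ∩ B ⊆ X := Set.inter_subset_left
        have hdiff : X' = X \ (X ∩ B) := by
          ext u
          simp only [hX', Set.mem_diff, Set.mem_inter_iff]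
          tauto
        rw [hdiff, Set.ncard_diff hXB (Set.toFinite _)]
        have harith : (2 * p + 1) * (k - 1) + 2 * (k - 1) = (2 * (p + 1) + 1) * (k - 1) := by
          ring
        omega
      obtain ⟨S', hS'A, hS'conn, hS'disj, hS'card⟩ :=
        IH (A \ B) X' hX'sub hABconn (fun x hx => hXdeg x hx.1) hX'card
      refine ⟨Fin.cons B S', ?_, ?_, ?_, ?_⟩
      · intro i
        refine Fin.cases ?_ ?_ i
        · exact hBA
        · exact fun j => (hS'A j).trans Set.diff_subset
      · intro i
        refine Fin.cases ?_ ?_ i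
        · exact induce_connected_of hBne hBconn
        · exact hS'conn
      · intro i j hij
        have hdisj0 : ∀ j' : Fin p, Disjoint B (S' j') := by
          intro j'
          exact Set.disjoint_sdiff_right.mono_right (hS'A j')
        rcases Fin.eq_zero_or_eq_succ i with rfl | ⟨i', rfl⟩ <;>
          rcases Fin.eq_zero_or_eq_succ j with rfl | ⟨j', rfl⟩
        · exact absurd rfl hij
        · simpa only [Fin.cons_zero, Fin.cons_succ] using hdisj0 j'
        · simpa only [Fin.cons_zero, Fin.cons_succ] using (hdisj0 i').symm
        · simp only [Fin.cons_succ]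
          exact hS'disj i' j' (fun h => hij (by rw [h]))
      · intro i
        refine Fin.cases ?_ ?_ i
        · simpa [Set.inter_comm] using hkB
        · intro j
          simp only [Fin.cons_succ]
          refine le_trans (hS'card j) (Set.ncard_le_ncard ?_ (Set.toFinite _))
          exact Set.inter_subset_inter_right _ Set.diff_subset
  
end Stmt15Aux


/-- let `T` be a finite tree with maximum degree at most 3 and `X` a set
of at least `(2p+1)(k-1)` vertices of degree at most 2 (`p ≥ 0`, `k ≥ 2`). Then there
are `p` pairwise disjoint subtrees `T₁, …, T_p` of `T` with `|V(Tᵢ) ∩ X| ≥ k` for all `i`. -/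
theorem stmt_15 {τ : Type} [Fintype τ] (T : SimpleGraph τ) (hT : T.IsTree)
    (hdeg3 : ∀ x : τ, (T.neighborSet x).ncard ≤ 3)
    (p k : ℕ) (hk : 2 ≤ k) (X : Set τ)
    (hXdeg : ∀ x ∈ X, (T.neighborSet x).ncard ≤ 2)
    (hXcard : (2 * p + 1) * (k - 1) ≤ X.ncard) :
    ∃ S : Fin p → Set τ,
      (∀ i, (T.induce (S i)).Connected) ∧
      (∀ i j, i ≠ j → Disjoint (S i) (S j)) ∧
      ∀ i, k ≤ (S i ∩ X).ncard := by
  classical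
  have hconn : ∀ u ∈ (Set.univ : Set τ), ∀ w ∈ (Set.univ : Set τ),
      ∃ q : T.Walk u w, ∀ z ∈ q.support, z ∈ (Set.univ : Set τ) := by
    intro u _ w _
    obtain ⟨q⟩ := hT.isConnected.preconnected u w
    exact ⟨q, fun z _ => Set.mem_univ z⟩
  obtain ⟨S, _, hSconn, hSdisj, hScard⟩ :=
    Stmt15Aux.main hT hdeg3 hk p Set.univ X (Set.subset_univ X) hconn hXdeg hXcard
  exact ⟨S, hSconn, hSdisj, hScard⟩
end
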